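/- Let L be a {0,1}-valued random variable and X, T random variables with finite ranges on the same probability space, and let c ∈ (0,1). Assume Pr(L=1 | X=x, T=t) ≤ c for every pair (x,t) with Pr(X=x, T=t) > 0. Then susp(X,T) ≤ (−log(1−c)/c)·Pr(L=1). -/

import Mathlib

open Finset

/-- Probability of an event `E` under the probability mass function `p`
on a finite sample space `Ω`. -/
noncomputable def Pr {Ω : Type*} [Fintype Ω] (p : Ω → ℝ) (E : Set Ω) : ℝ :=
  ∑ ω, E.indicator p ω

/-- Conditional probability `Pr(E | F)`. -/
noncomputable def cPr {Ω : Type*} [Fintype Ω] (p : Ω → ℝ) (E F : Set Ω) : ℝ :=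
  Pr p (E ∩ F) / Pr p F

/-- The suspicion given a random variable `Yv`:
`susp(Y) = Σ_y Pr(Y=y) · (−log₂ Pr(L=0 | Y=y))`. -/
noncomputable def susp {Ω Y : Type*} [Fintype Ω] [Fintype Y] (p : Ω → ℝ)
    (L : Ω → Bool) (Yv : Ω → Y) : ℝ :=
  ∑ y, Pr p {ω | Yv ω = y} * (-Real.logb 2 (cPr p {ω | L ω = false} {ω | Yv ω = y}))

/-- Mutual information (base 2) between two finite-valued random variables. -/
noncomputable def mutInfo {Ω S T : Type*} [Fintype Ω] [Fintype S] [Fintype T]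
    (p : Ω → ℝ) (Xv : Ω → S) (Av : Ω → T) : ℝ :=
  ∑ x, ∑ a, Pr p {ω | Xv ω = x ∧ Av ω = a} *
    Real.logb 2 (Pr p {ω | Xv ω = x ∧ Av ω = a} /
      (Pr p {ω | Xv ω = x} * Pr p {ω | Av ω = a}))

/-- Conditional Shannon entropy (base 2) `H(A | X)`. -/
noncomputable def condEntropy {Ω S T : Type*} [Fintype Ω] [Fintype S] [Fintype T]
    (p : Ω → ℝ) (Av : Ω → T) (Xv : Ω → S) : ℝ :=
  ∑ x, ∑ a, Pr p {ω | Xv ω = x ∧ Av ω = a} *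
    Real.logb 2 (Pr p {ω | Xv ω = x} / Pr p {ω | Xv ω = x ∧ Av ω = a})

/-- Conditional mutual information (base 2) `I(X; A | Z)`. -/
noncomputable def condMutInfo {Ω S T U : Type*} [Fintype Ω] [Fintype S] [Fintype T] [Fintype U]
    (p : Ω → ℝ) (Xv : Ω → S) (Av : Ω → T) (Zv : Ω → U) : ℝ :=
  ∑ z, ∑ x, ∑ a, Pr p {ω | Xv ω = x ∧ Av ω = a ∧ Zv ω = z} *
    Real.logb 2 ((Pr p {ω | Xv ω = x ∧ Av ω = a ∧ Zv ω = z} * Pr p {ω | Zv ω = z}) /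
      (Pr p {ω | Xv ω = x ∧ Zv ω = z} * Pr p {ω | Av ω = a ∧ Zv ω = z}))

lemma Pr_nonneg' {Ω : Type*} [Fintype Ω] {p : Ω → ℝ} (hp : ∀ ω, 0 ≤ p ω) (E : Set Ω) :
    0 ≤ Pr p E :=
  Finset.sum_nonneg fun ω _ => Set.indicator_nonneg (fun ω _ => hp ω) ω

lemma Pr_mono' {Ω : Type*} [Fintype Ω] {p : Ω → ℝ} (hp : ∀ ω, 0 ≤ p ω) {E F : Set Ω}
    (h : E ⊆ F) : Pr p E ≤ Pr p F := by
  apply Finset.sum_le_sum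
  intro ω _
  classical
  by_cases hω : ω ∈ E
  · rw [Set.indicator_of_mem hω, Set.indicator_of_mem (h hω)]
  · rw [Set.indicator_of_notMem hω]
    exact Set.indicator_nonneg (fun ω _ => hp ω) ω

lemma Pr_split_bool {Ω : Type*} [Fintype Ω] (p : Ω → ℝ) (L : Ω → Bool) (A : Set Ω) :
    Pr p ({ω | L ω = false} ∩ A) + Pr p ({ω | L ω = true} ∩ A) = Pr p A := by
  classical
  unfold Pr
  rw [← Finset.sum_add_distrib]
  apply Finset.sum_congr rfl
  intro ω _
  simp only [Set.indicator_apply, Set.mem_inter_iff, Set.mem_setOf_eq]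
  cases hL : L ω <;> by_cases hA : ω ∈ A <;> simp [hA]

lemma neg_logb_le (c q : ℝ) (hc0 : 0 < c) (hc1 : c < 1) (hq0 : 0 ≤ q) (hqc : q ≤ c) :
    -Real.logb 2 (1 - q) ≤ (-Real.logb 2 (1 - c) / c) * q := by
  have hkey : (q / c) * Real.log (1 - c) ≤ Real.log (1 - q) := by
    have ha : (0:ℝ) ≤ 1 - q / c := by
      have : q / c ≤ 1 := (div_le_one hc0).2 hqc
      linarith
    have hb : (0:ℝ) ≤ q / c := div_nonneg hq0 hc0.le
    have hab : (1 - q / c) + q / c = 1 := by ring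
    have hcc := (strictConcaveOn_log_Ioi.concaveOn).2 (Set.mem_Ioi.2 one_pos)
      (Set.mem_Ioi.2 (by linarith : (0:ℝ) < 1 - c)) ha hb hab
    have harg : (1 - q / c) • (1:ℝ) + (q / c) • (1 - c) = 1 - q := by
      field_simp
      rw [smul_eq_mul, smul_eq_mul, div_mul_eq_mul_div, div_mul_eq_mul_div, ← add_div, div_eq_iff hc0.ne']; ring
    rw [harg] at hcc
    simp only [smul_eq_mul, Real.log_one, mul_one] at hcc
    linarith
  have hlog2 : (0:ℝ) < Real.log 2 := Real.log_pos (by norm_num)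
  have h1 : -Real.log (1 - q) ≤ -Real.log (1 - c) / c * q := by
    have heq : (q / c) * Real.log (1 - c) = Real.log (1 - c) / c * q := by ring
    have heq2 : -Real.log (1 - c) / c * q = -(Real.log (1 - c) / c * q) := by ring
    linarith
  calc -Real.logb 2 (1 - q) = (-Real.log (1 - q)) / Real.log 2 := by
        rw [Real.logb]; ring
    _ ≤ (-Real.log (1 - c) / c * q) / Real.log 2 := by gcongr
    _ = -Real.logb 2 (1 - c) / c * q := by rw [Real.logb]; ring

/-- if `Pr(L=1 | X=x, T=t) ≤ c` for all `(x,t)` of positive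
probability, then `susp(X,T) ≤ (−log₂(1−c)/c)·Pr(L=1)`. -/
theorem susp_le_of_cond_prob_le {Ω S U : Type*} [Fintype Ω] [Fintype S] [Fintype U]
    (p : Ω → ℝ) (hp : ∀ ω, 0 ≤ p ω) (hp1 : ∑ ω, p ω = 1)
    (X : Ω → S) (T : Ω → U) (L : Ω → Bool)
    (c : ℝ) (hc0 : 0 < c) (hc1 : c < 1)
    (hc : ∀ (x : S) (t : U), 0 < Pr p {ω | X ω = x ∧ T ω = t} →
      cPr p {ω | L ω = true} {ω | X ω = x ∧ T ω = t} ≤ c) :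
    susp p L (fun ω => (X ω, T ω)) ≤
      (-Real.logb 2 (1 - c) / c) * Pr p {ω | L ω = true} := by
  classical
  set K : ℝ := -Real.logb 2 (1 - c) / c with hK
  have hKnn : 0 ≤ K := by
    have : -Real.logb 2 (1 - c) = -Real.logb 2 (1 - c) / c * c := by field_simp
    have h0 : -Real.logb 2 (1 - 0) ≤ -Real.logb 2 (1 - c) / c * 0 :=
      neg_logb_le c 0 hc0 hc1 le_rfl hc0.le
    have hc' : -Real.logb 2 (1 - c) ≤ -Real.logb 2 (1 - c) / c * c := le_of_eq ‹_›
    have hb : (0:ℝ) ≤ -Real.logb 2 (1 - c) := by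
      have : Real.logb 2 (1 - c) ≤ 0 :=
        Real.logb_nonpos (by norm_num) (by linarith) (by linarith)
      linarith
    positivity
  -- total probability of L = true decomposed over pairs
  have htotal : ∑ y : S × U, Pr p ({ω | L ω = true} ∩ {ω | (X ω, T ω) = y})
      = Pr p {ω | L ω = true} := by
    unfold Pr
    rw [Finset.sum_comm]
    apply Finset.sum_congr rfl
    intro ω _
    rw [Finset.sum_eq_single (X ω, T ω)]
    · simp only [Set.indicator_apply, Set.mem_inter_iff, Set.mem_setOf_eq, and_true]
    · intro y _ hy
      simp only [Set.indicator_apply, Set.mem_inter_iff, Set.mem_setOf_eq]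
      rw [if_neg]
      rintro ⟨-, h2⟩
      exact hy h2.symm
    · intro h
      exact absurd (Finset.mem_univ _) h
  rw [← htotal, Finset.mul_sum]
  unfold susp
  apply Finset.sum_le_sum
  rintro ⟨x, t⟩ -
  set A : Set Ω := {ω | (X ω, T ω) = (x, t)} with hA
  have hAeq : A = {ω | X ω = x ∧ T ω = t} := by
    ext ω; simp [hA, Prod.ext_iff]
  have hAnn : 0 ≤ Pr p A := Pr_nonneg' hp A
  rcases eq_or_lt_of_le hAnn with h0 | hpos
  · rw [← h0, zero_mul]
    exact mul_nonneg hKnn (Pr_nonneg' hp _)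
  · have hq : cPr p {ω | L ω = true} A ≤ c := by
      rw [hAeq]
      exact hc x t (by rw [← hAeq]; exact hpos)
    have hq0 : 0 ≤ cPr p {ω | L ω = true} A :=
      div_nonneg (Pr_nonneg' hp _) hAnn
    have hsplit := Pr_split_bool p L A
    have hfalse : cPr p {ω | L ω = false} A = 1 - cPr p {ω | L ω = true} A := by
      unfold cPr
      field_simp
      linarith
    have hle := neg_logb_le c (cPr p {ω | L ω = true} A) hc0 hc1 hq0 hq
    rw [hfalse]
    calc Pr p A * -Real.logb 2 (1 - cPr p {ω | L ω = true} A)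
        ≤ Pr p A * (K * cPr p {ω | L ω = true} A) := by
          apply mul_le_mul_of_nonneg_left _ hpos.le
          rw [hK]; exact hle
      _ = K * (Pr p A * (Pr p ({ω | L ω = true} ∩ A) / Pr p A)) := by
          rw [cPr]; ring
      _ = K * Pr p ({ω | L ω = true} ∩ A) := by
          rw [mul_div_cancel₀ _ (ne_of_gt hpos)]
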